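/- arXiv:2604.28004 — 5 statements merged into one kernel-verified Lean document; each statement's English description precedes it below -/
import Mathlib

section
/- Let A be a nonempty convex subset of a real normed space X with A ≠ X, let 0 < r < ∞, and let C ⊆ B_r(A) be a subset whose distance to the boundary ∂B_r(A) equals γ > 0. Then for every 0 < δ ≤ min{r, γ}, the set C is contained in B_{r-δ}(A). -/
open Metric

/-- Along a ray from a point of a convex set, the distance to the set grows at least
linearly. -/
lemma ray_infDist_le {X : Type*} [NormedAddCommGroup X] [NormedSpace ℝ X] {A : Set X}
    (hA : A.Nonempty) (hconv : Convex ℝ A) {a : X} (ha : a ∈ A) (x : X) {s : ℝ}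
    (hs : 1 ≤ s) : s * infDist x A ≤ infDist (a + s • (x - a)) A := by
  have hs0 : 0 < s := lt_of_lt_of_le one_pos hs
  by_contra hcon
  push_neg at hcon
  obtain ⟨b, hb, hdb⟩ := (infDist_lt_iff hA).1 hcon
  have hinv0 : 0 ≤ s⁻¹ := by positivity
  have hinv1 : s⁻¹ ≤ 1 := by
    rw [inv_le_one_iff₀]; right; exact hs
  have hmem : (1 - s⁻¹) • a + s⁻¹ • b ∈ A :=
    hconv ha hb (by linarith) hinv0 (by ring)
  have h1 : infDist x A ≤ dist x ((1 - s⁻¹) • a + s⁻¹ • b) :=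
    infDist_le_dist_of_mem hmem
  have h2 : dist x ((1 - s⁻¹) • a + s⁻¹ • b) = s⁻¹ * dist (a + s • (x - a)) b := by
    rw [dist_eq_norm, dist_eq_norm]
    have : x - ((1 - s⁻¹) • a + s⁻¹ • b) = s⁻¹ • (a + s • (x - a) - b) := by
      rw [smul_sub, smul_add, smul_smul, inv_mul_cancel₀ hs0.ne']
      module
    rw [this, norm_smul, Real.norm_eq_abs, abs_of_nonneg hinv0]
  have : s * infDist x A ≤ s * (s⁻¹ * dist (a + s • (x - a)) b) :=
    mul_le_mul_of_nonneg_left (h2 ▸ h1) hs0.le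
  have h3 : s * (s⁻¹ * dist (a + s • (x - a)) b) = dist (a + s • (x - a)) b := by
    field_simp
  linarith

/-- Let `A` be a nonempty convex proper subset of a real normed space, `0 < r`, and let
`C ⊆ B_r(A)` be at distance `γ > 0` from the boundary `∂ B_r(A)`. Then for every
`0 < δ ≤ min r γ`, the set `C` is contained in `B_{r-δ}(A)`. -/
theorem stmt6 {X : Type*} [NormedAddCommGroup X] [NormedSpace ℝ X] (A : Set X)
    (hA : A.Nonempty) (hconv : Convex ℝ A) (hne : A ≠ Set.univ) (r : ℝ) (hr : 0 < r)
    (C : Set X) (hC : C ⊆ {p : X | Metric.infDist p A ≤ r}) (γ : ℝ) (hγ : 0 < γ)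
    (hdist :
      sInf ((fun c => Metric.infDist c (frontier {p : X | Metric.infDist p A ≤ r})) '' C) = γ)
    (δ : ℝ) (hδ0 : 0 < δ) (hδ : δ ≤ min r γ) :
    C ⊆ {p : X | Metric.infDist p A ≤ r - δ} := by
  have hδr : δ ≤ r := hδ.trans (min_le_left _ _)
  have hδγ : δ ≤ γ := hδ.trans (min_le_right _ _)
  intro c hc
  by_contra hcon
  simp only [Set.mem_setOf_eq, not_le] at hcon
  set B : Set X := {p : X | Metric.infDist p A ≤ r} with hB
  set d : ℝ := infDist c A with hd
  have hdr : d ≤ r := hC hc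
  have hd0 : 0 < d := lt_of_le_of_lt (by linarith) hcon
  have hrd : r - d < γ := by linarith
  -- distance from c to the frontier is at least γ
  have hγle : γ ≤ infDist c (frontier B) := by
    rw [← hdist]
    exact csInf_le ⟨0, fun x ⟨y, _, hy⟩ => hy ▸ infDist_nonneg⟩ ⟨c, hc, rfl⟩
  clear_value d
  -- choose a good point a ∈ A
  have hrd0 : 0 ≤ r - d := by linarith
  obtain ⟨ε, hε0, hεeq⟩ : ∃ ε : ℝ, 0 < ε ∧ ε * (2 * (r - d + 1)) = (γ - (r - d)) * d := by
    refine ⟨((γ - (r - d)) * d) / (2 * (r - d + 1)),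
      div_pos (by nlinarith) (by linarith), ?_⟩
    field_simp
  obtain ⟨a, haA, hca⟩ : ∃ a ∈ A, dist c a < d + ε :=
    (infDist_lt_iff hA).1 (by linarith)
  have hdca : d ≤ dist c a := by rw [hd]; exact infDist_le_dist_of_mem haA
  have hca0 : 0 < dist c a := lt_of_lt_of_le hd0 hdca
  -- the function along the ray
  set g : ℝ → ℝ := fun t => infDist (a + t • (c - a)) A with hg
  have hg1 : g 1 = d := by simp [hg, hd]
  have hmap : Continuous fun t : ℝ => a + t • (c - a) :=
    continuous_const.add (continuous_id.smul continuous_const)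
  have hgcont : Continuous g := by
    have h := (continuous_infDist_pt A).comp hmap
    exact h
  set T : ℝ := (r + 1) / d with hT
  have hT1 : 1 ≤ T := by
    rw [le_div_iff₀ hd0]; linarith
  have hgT : r ≤ g T := by
    have := ray_infDist_le hA hconv haA c hT1
    have hTd : T * d = r + 1 := by rw [hT, div_mul_cancel₀ _ hd0.ne']
    rw [← hd] at this
    calc r ≤ T * d := by linarith
      _ ≤ g T := this
  -- intermediate value: find t with g t = r
  obtain ⟨t, htmem, hgt⟩ : ∃ t ∈ Set.Icc 1 T, g t = r := by
    have := intermediate_value_Icc hT1 hgcont.continuousOn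
      (show r ∈ Set.Icc (g 1) (g T) from ⟨hg1 ▸ hdr, hgT⟩)
    exact this
  have ht1 : 1 ≤ t := htmem.1
  have hgt' : infDist (a + t • (c - a)) A = r := hgt
  have htd : t * d ≤ r := by
    have h := ray_infDist_le hA hconv haA c ht1
    rw [← hd, hgt'] at h
    exact h
  set q : X := a + t • (c - a) with hq
  -- q is on the frontier of B
  have hqB : q ∈ B := le_of_eq hgt'
  have hqF : q ∈ frontier B := by
    refine ⟨subset_closure hqB, fun hint => ?_⟩
    obtain ⟨η, hη0, hball⟩ := Metric.mem_nhds_iff.1 (mem_interior_iff_mem_nhds.1 hint)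
    have ht0 : 0 < t := lt_of_lt_of_le one_pos ht1
    have hσ0 : 0 < η / (2 * t * dist c a) := by positivity
    obtain ⟨σ, hσ0, hσeq⟩ : ∃ σ : ℝ, 0 < σ ∧ σ * t * dist c a = η / 2 :=
      ⟨η / (2 * t * dist c a), hσ0, by field_simp⟩
    have hs1 : (1 : ℝ) < 1 + σ := by linarith
    have hpt : a + (1 + σ) • (q - a) = a + ((1 + σ) * t) • (c - a) := by
      rw [hq, add_sub_cancel_left, smul_smul]
    have hnear : a + ((1 + σ) * t) • (c - a) ∈ Metric.ball q η := by
      rw [Metric.mem_ball, dist_eq_norm]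
      have heq : a + ((1 + σ) * t) • (c - a) - q = (σ * t) • (c - a) := by
        rw [hq]; module
      rw [heq, norm_smul, Real.norm_eq_abs,
        abs_of_nonneg (by positivity : (0:ℝ) ≤ σ * t), ← dist_eq_norm]
      calc σ * t * dist c a = η / 2 := hσeq
        _ < η := by linarith
    have hle : (1 + σ) * infDist q A ≤ infDist (a + (1 + σ) • (q - a)) A :=
      ray_infDist_le hA hconv haA q hs1.le
    have hqr : infDist q A = r := hgt'
    have hmem' : infDist (a + ((1 + σ) * t) • (c - a)) A ≤ r := hball hnear
    rw [hpt, hqr] at hle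
    nlinarith
  -- distance from c to q
  have hcq : dist c q = (t - 1) * dist c a := by
    rw [dist_eq_norm, dist_eq_norm]
    have : c - q = (1 - t) • (c - a) := by rw [hq]; module
    rw [this, norm_smul, Real.norm_eq_abs, abs_of_nonpos (by linarith)]
    ring
  have hfin : infDist c (frontier B) ≤ (t - 1) * dist c a :=
    hcq ▸ infDist_le_dist_of_mem hqF
  -- contradiction
  clear_value B g T q
  have hkey : (t - 1) * dist c a < γ := by
    have h1 : (t - 1) * d ≤ r - d := by nlinarith [htd]
    have h2 : (t - 1) * dist c a ≤ (t - 1) * (d + ε) :=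
      mul_le_mul_of_nonneg_left hca.le (by linarith)
    have h3 : (t - 1) * (d + ε) * d ≤ (r - d) * (d + ε) := by
      nlinarith [mul_le_mul_of_nonneg_right h1 (show (0:ℝ) ≤ d + ε by linarith)]
    have hγd : γ * d = (r - d) * d + 2 * ((r - d) * ε) + 2 * ε := by
      linear_combination -hεeq
    have hexp : (r - d) * (d + ε) = (r - d) * d + (r - d) * ε := by ring
    have h4 : (r - d) * (d + ε) < γ * d := by
      rw [hexp, hγd]
      have := mul_nonneg hrd0 hε0.le
      linarith
    have h6 : (t - 1) * (d + ε) < γ :=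
      lt_of_mul_lt_mul_right (lt_of_le_of_lt h3 h4) hd0.le
    linarith [h2, h6]
  linarith
end

section
/- Let X be a metric space and M_1, ..., M_n nonempty closed subsets with pairwise finite Hausdorff distances. Suppose K_1 and K_2 are both solutions of the Fermat–Steiner problem (minimizers of K ↦ Σ_i d_H(K, M_i) over nonempty closed sets K with all d_H(K, M_i) finite) with d_H(K_1, M_i) = d_H(K_2, M_i) = d_i for all i, and K_1 ⊆ K_2. Then any nonempty closed set K with K_1 ⊆ K ⊆ K_2 is also a solution with d_H(K, M_i) = d_i for all i. -/
open EMetric ENNReal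

/-- `K` is a solution of the Fermat–Steiner problem on the boundary sets `M i`:
`K` is nonempty, closed, at finite Hausdorff distance from every `M i`, and minimizes
the sum of Hausdorff distances to the `M i` among all such sets. -/
def IsFSSol {X : Type*} [MetricSpace X] {n : ℕ} (M : Fin n → Set X) (K : Set X) : Prop :=
  K.Nonempty ∧ IsClosed K ∧ (∀ i, hausdorffEdist K (M i) ≠ ⊤) ∧
  ∀ K' : Set X, K'.Nonempty → IsClosed K' → (∀ i, hausdorffEdist K' (M i) ≠ ⊤) →
    (∑ i, hausdorffEdist K (M i)) ≤ ∑ i, hausdorffEdist K' (M i)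

private lemma sum_eq_forall_eq {n : ℕ} {f g : Fin n → ℝ≥0∞}
    (hle : ∀ i, f i ≤ g i) (hfin : ∀ i, g i ≠ ⊤)
    (hsum : ∑ i, g i ≤ ∑ i, f i) : ∀ i, f i = g i := by
  intro j
  by_contra h
  have hlt : f j < g j := lt_of_le_of_ne (hle j) h
  have hrest : ∑ i ∈ Finset.univ.erase j, f i ≤ ∑ i ∈ Finset.univ.erase j, g i :=
    Finset.sum_le_sum fun i _ => hle i
  have hrfin : ∑ i ∈ Finset.univ.erase j, f i ≠ ⊤ := by
    rw [ENNReal.sum_ne_top]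
    exact fun i _ => ne_top_of_le_ne_top (hfin i) (hle i)
  have : ∑ i, f i < ∑ i, g i := by
    rw [← Finset.add_sum_erase _ f (Finset.mem_univ j),
        ← Finset.add_sum_erase _ g (Finset.mem_univ j)]
    exact ENNReal.add_lt_add_of_lt_of_le hrfin hlt hrest
  exact absurd hsum (not_le.mpr this)

/-- If `K₁ ⊆ K₂` are Fermat–Steiner solutions with the same distance vector `d`, then any
nonempty closed set `K` with `K₁ ⊆ K ⊆ K₂` is also a solution with distance vector `d`. -/
theorem stmt13 {X : Type*} [MetricSpace X] {n : ℕ} (M : Fin n → Set X)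
    (hM : ∀ i, (M i).Nonempty ∧ IsClosed (M i))
    (hfin : ∀ i j, hausdorffEdist (M i) (M j) ≠ ⊤)
    (d : Fin n → ℝ≥0∞)
    (K₁ K₂ : Set X) (hK₁ : IsFSSol M K₁) (hK₂ : IsFSSol M K₂)
    (hd₁ : ∀ i, hausdorffEdist K₁ (M i) = d i)
    (hd₂ : ∀ i, hausdorffEdist K₂ (M i) = d i)
    (h12 : K₁ ⊆ K₂)
    (K : Set X) (hKne : K.Nonempty) (hKcl : IsClosed K) (h1K : K₁ ⊆ K) (hK2 : K ⊆ K₂) :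
    IsFSSol M K ∧ ∀ i, hausdorffEdist K (M i) = d i := by
  have hdfin : ∀ i, d i ≠ ⊤ := fun i => hd₁ i ▸ hK₁.2.2.1 i
  have hle : ∀ i, hausdorffEdist K (M i) ≤ d i := by
    intro i
    apply hausdorffEdist_le_of_infEdist
    · intro x hx
      calc infEdist x (M i) ≤ hausdorffEdist K₂ (M i) :=
            infEdist_le_hausdorffEdist_of_mem (hK2 hx)
        _ = d i := hd₂ i
    · intro y hy
      calc infEdist y K ≤ infEdist y K₁ := infEdist_anti h1K
        _ ≤ hausdorffEdist (M i) K₁ := infEdist_le_hausdorffEdist_of_mem hy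
        _ = d i := by rw [show hausdorffEdist (M i) K₁ = hausdorffEdist K₁ (M i) from hausdorffEdist_comm, hd₁ i]
  have hKfin : ∀ i, hausdorffEdist K (M i) ≠ ⊤ :=
    fun i => ne_top_of_le_ne_top (hdfin i) (hle i)
  have hmin : ∀ K' : Set X, K'.Nonempty → IsClosed K' →
      (∀ i, hausdorffEdist K' (M i) ≠ ⊤) →
      (∑ i, hausdorffEdist K (M i)) ≤ ∑ i, hausdorffEdist K' (M i) := by
    intro K' h1 h2 h3
    calc ∑ i, hausdorffEdist K (M i) ≤ ∑ i, d i := Finset.sum_le_sum fun i _ => hle i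
      _ = ∑ i, hausdorffEdist K₁ (M i) := by simp [hd₁]
      _ ≤ ∑ i, hausdorffEdist K' (M i) := hK₁.2.2.2 K' h1 h2 h3
  have hsum : ∑ i, d i ≤ ∑ i, hausdorffEdist K (M i) := by
    calc ∑ i, d i = ∑ i, hausdorffEdist K₁ (M i) := by simp [hd₁]
      _ ≤ ∑ i, hausdorffEdist K (M i) := hK₁.2.2.2 K hKne hKcl hKfin
  exact ⟨⟨hKne, hKcl, hKfin, hmin⟩, sum_eq_forall_eq hle hdfin hsum⟩
end

section
/- Let X be a metric space, M_1, ..., M_n nonempty closed subsets with pairwise finite Hausdorff distances, and suppose K is a solution of the Fermat–Steiner problem with d_H(K, M_i) = d_i for all i. Then K_d := ∩_{i=1}^n B_{d_i}(M_i) also satisfies d_H(K_d, M_i) = d_i for all i (hence is a solution), and every solution K' with distance vector (d_1,...,d_n) satisfies K' ⊆ K_d; i.e., K_d is the greatest element of the solution class Σ_d with respect to inclusion. -/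
open EMetric ENNReal

/-- `K_d = ⋂ i B_{d i}(M i)` is the greatest element (w.r.t. inclusion) of the solution
class `Σ_d` of the Fermat–Steiner problem. -/
theorem stmt14 {X : Type*} [MetricSpace X] {n : ℕ} (M : Fin n → Set X)
    (hM : ∀ i, (M i).Nonempty ∧ IsClosed (M i))
    (hfin : ∀ i j, hausdorffEdist (M i) (M j) ≠ ⊤)
    (d : Fin n → ℝ≥0∞)
    (K : Set X) (hK : IsFSSol M K) (hd : ∀ i, hausdorffEdist K (M i) = d i)
    (Kd : Set X) (hKd : Kd = ⋂ i, {p : X | infEdist p (M i) ≤ d i}) :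
    IsFSSol M Kd ∧ (∀ i, hausdorffEdist Kd (M i) = d i) ∧
      ∀ K' : Set X, IsFSSol M K' → (∀ i, hausdorffEdist K' (M i) = d i) → K' ⊆ Kd := by
  obtain ⟨hKne, hKcl, hKfin, hKmin⟩ := hK
  -- any set with distances d is contained in Kd
  have hsub : ∀ K' : Set X, (∀ i, hausdorffEdist K' (M i) = d i) → K' ⊆ Kd := by
    intro K' hK' x hx
    rw [hKd]
    refine Set.mem_iInter.2 fun i => ?_
    exact (hK' i) ▸ infEdist_le_hausdorffEdist_of_mem hx
  have hKsub : K ⊆ Kd := hsub K hd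
  have hKdne : Kd.Nonempty := hKne.mono hKsub
  have hKdcl : IsClosed Kd := by
    rw [hKd]
    exact isClosed_iInter fun i => isClosed_le continuous_infEdist continuous_const
  have hdtop : ∀ i, d i ≠ ⊤ := fun i => (hd i) ▸ hKfin i
  have hle : ∀ i, hausdorffEdist Kd (M i) ≤ d i := by
    intro i
    refine hausdorffEdist_le_of_infEdist (fun x hx => ?_) (fun y hy => ?_)
    · rw [hKd] at hx; exact Set.mem_iInter.1 hx i
    · calc infEdist y Kd ≤ infEdist y K := infEdist_anti hKsub
        _ ≤ hausdorffEdist (M i) K := infEdist_le_hausdorffEdist_of_mem hy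
        _ = d i := by exact hausdorffEdist_comm.trans (hd i)
  have hKdfin : ∀ i, hausdorffEdist Kd (M i) ≠ ⊤ :=
    fun i => ne_top_of_le_ne_top (hdtop i) (hle i)
  have hsum : ∑ i, d i ≤ ∑ i, hausdorffEdist Kd (M i) := by
    have := hKmin Kd hKdne hKdcl hKdfin
    calc ∑ i, d i = ∑ i, hausdorffEdist K (M i) := by simp [hd]
      _ ≤ _ := this
  have heq : ∀ j, hausdorffEdist Kd (M j) = d j := by
    intro j
    refine le_antisymm (hle j) ?_
    by_contra h
    have hlt : hausdorffEdist Kd (M j) < d j := lt_of_le_of_ne (hle j) (fun e => h (le_of_eq e.symm))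
    have herase : (∑ i ∈ Finset.univ.erase j, d i) ≠ ⊤ :=
      (ENNReal.sum_lt_top.2 fun i _ => lt_top_iff_ne_top.2 (hdtop i)).ne
    have : ∑ i, hausdorffEdist Kd (M i) < ∑ i, d i := by
      calc ∑ i, hausdorffEdist Kd (M i)
          = hausdorffEdist Kd (M j) + ∑ i ∈ Finset.univ.erase j, hausdorffEdist Kd (M i) :=
            (Finset.add_sum_erase _ _ (Finset.mem_univ j)).symm
        _ ≤ hausdorffEdist Kd (M j) + ∑ i ∈ Finset.univ.erase j, d i :=
            add_le_add_right (Finset.sum_le_sum fun i _ => hle i) _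
        _ < d j + ∑ i ∈ Finset.univ.erase j, d i :=
            ENNReal.add_lt_add_right herase hlt
        _ = ∑ i, d i := Finset.add_sum_erase _ _ (Finset.mem_univ j)
    exact absurd hsum (not_le.2 this)
  refine ⟨⟨hKdne, hKdcl, hKdfin, fun K' h1 h2 h3 => ?_⟩, heq, fun K' _ hK'd => hsub K' hK'd⟩
  calc ∑ i, hausdorffEdist Kd (M i) = ∑ i, d i := by simp [heq]
    _ = ∑ i, hausdorffEdist K (M i) := by simp [hd]
    _ ≤ ∑ i, hausdorffEdist K' (M i) := hKmin K' h1 h2 h3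
end

section
/- Let X be a metric space, M_1, ..., M_n nonempty closed subsets with pairwise finite Hausdorff distances, and d = (d_1,...,d_n) the distance vector of a class of Fermat–Steiner solutions with greatest element K_d = ∩_i B_{d_i}(M_i). If d_i = sup_{x ∈ M_i} |x K_d| for some index i, then for every solution K in the class Σ_d we also have d_i = sup_{x ∈ M_i} |x K|. -/
open EMetric ENNReal

/-- If the distance `d i` is realized one-sidedly from `M i` on the greatest solution
`K_d`, then it is realized one-sidedly from `M i` on every solution `K ∈ Σ_d`. -/
theorem stmt16 {X : Type*} [MetricSpace X] {n : ℕ} (M : Fin n → Set X)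
    (hM : ∀ j, (M j).Nonempty ∧ IsClosed (M j))
    (hfin : ∀ i j, hausdorffEdist (M i) (M j) ≠ ⊤)
    (d : Fin n → ℝ≥0∞)
    (Kd : Set X) (hKd : Kd = ⋂ j, {p : X | infEdist p (M j) ≤ d j})
    (i : Fin n) (hi : d i = ⨆ x ∈ M i, infEdist x Kd)
    (K : Set X) (hK : IsFSSol M K) (hdK : ∀ j, hausdorffEdist K (M j) = d j) :
    d i = ⨆ x ∈ M i, infEdist x K := by
  have hsub : K ⊆ Kd := by
    intro p hp
    rw [hKd]
    exact Set.mem_iInter.2 fun j =>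
      (infEdist_le_hausdorffEdist_of_mem hp).trans (hdK j).le
  apply le_antisymm
  · rw [hi]
    exact iSup₂_mono fun x _ => infEdist_anti hsub
  · refine iSup₂_le fun x hx => ?_
    calc infEdist x K ≤ hausdorffEdist (M i) K :=
          infEdist_le_hausdorffEdist_of_mem hx
      _ = d i := hausdorffEdist_comm.trans (hdK i)
end

section
/- Let X be a connected metric space and M_1, ..., M_n nonempty closed subsets with pairwise finite Hausdorff distances. Let d = (d_1,...,d_n) be the distance vector of a Fermat–Steiner solution and K_d = ∩_{i=1}^n B_{d_i}(M_i) the greatest solution in its class. Then there exists an index i such that d_i = sup_{x ∈ K_d} |x M_i|. -/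
open EMetric ENNReal

/-- In a connected metric space, for the greatest Fermat–Steiner solution
`K_d = ⋂ i B_{d i}(M i)` there is an index `i` with `d i = sup_{x ∈ K_d} |x M_i|`. -/
theorem stmt17 {X : Type*} [MetricSpace X] [ConnectedSpace X] {n : ℕ} (hn : 0 < n)
    (M : Fin n → Set X)
    (hM : ∀ i, (M i).Nonempty ∧ IsClosed (M i))
    (hfin : ∀ i j, hausdorffEdist (M i) (M j) ≠ ⊤)
    (d : Fin n → ℝ≥0∞) (hdfin : ∀ i, d i ≠ ⊤)
    (hsol : ∃ K₀ : Set X, IsFSSol M K₀ ∧ ∀ i, hausdorffEdist K₀ (M i) = d i)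
    (Kd : Set X) (hKd : Kd = ⋂ i, {p : X | infEdist p (M i) ≤ d i})
    (hKdne : Kd.Nonempty) (hKddist : ∀ i, hausdorffEdist Kd (M i) = d i) :
    ∃ i, d i = ⨆ x ∈ Kd, infEdist x (M i) := by
  by_contra h
  push_neg at h
  have hmem : ∀ x ∈ Kd, ∀ i, infEdist x (M i) ≤ d i := by
    intro x hx i
    rw [hKd] at hx
    exact Set.mem_iInter.mp hx i
  have hle : ∀ i, (⨆ x ∈ Kd, infEdist x (M i)) ≤ d i := fun i =>
    iSup₂_le fun x hx => hmem x hx i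
  have hlt : ∀ i, (⨆ x ∈ Kd, infEdist x (M i)) < d i := fun i =>
    lt_of_le_of_ne (hle i) (fun e => h i e.symm)
  have hopen : IsOpen Kd := by
    rw [EMetric.isOpen_iff]
    intro x hx
    obtain ⟨i₀, -, hi₀⟩ := Finset.exists_min_image Finset.univ
      (fun i => d i - infEdist x (M i)) ⟨⟨0, hn⟩, Finset.mem_univ _⟩
    refine ⟨d i₀ - infEdist x (M i₀), ?_, ?_⟩
    · have h1 : infEdist x (M i₀) < d i₀ :=
        lt_of_le_of_lt (le_iSup₂ (f := fun y _ => infEdist y (M i₀)) x hx) (hlt i₀)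
      exact tsub_pos_of_lt h1
    · intro y hy
      rw [hKd, Set.mem_iInter]
      intro i
      have hyx : edist y x ≤ d i - infEdist x (M i) :=
        le_trans (le_of_lt (EMetric.mem_ball.mp hy)) (hi₀ i (Finset.mem_univ i))
      calc infEdist y (M i) ≤ infEdist x (M i) + edist y x :=
              infEdist_le_infEdist_add_edist
        _ ≤ infEdist x (M i) + (d i - infEdist x (M i)) := add_le_add le_rfl hyx
        _ = d i := add_tsub_cancel_of_le (hmem x hx i)
  have hclosed : IsClosed Kd := by
    rw [hKd]
    exact isClosed_iInter fun i => isClosed_le continuous_infEdist continuous_const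
  have huniv : Kd = Set.univ := (IsClopen.eq_univ ⟨hclosed, hopen⟩ : Kd.Nonempty → _) hKdne
  have i := (⟨0, hn⟩ : Fin n)
  have hcomp : hausdorffEdist Kd (M i) = ⨆ x ∈ Kd, infEdist x (M i) := by
    rw [hausdorffEdist, hausdorffEdist_def]
    have h2 : (⨆ y ∈ M i, infEdist y Kd) = 0 := by
      refine le_antisymm (iSup₂_le fun y _ => ?_) zero_le
      rw [huniv]
      exact le_of_eq (infEdist_zero_of_mem (Set.mem_univ y))
    erw [h2, sup_eq_left.mpr zero_le]
    rfl
  exact absurd (hcomp ▸ hKddist i) (ne_of_gt (hlt i)).symm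
end
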